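/- Let A be a connected N-graded k-algebra of finite Gelfand-Kirillov dimension. If GKdim(A) ≤ 2 then GKdim(A) ∈ {0, 1, 2} and in fact if GKdim(A) < 2 then GKdim(A) is either 0 or 1 (no values strictly between 1 and 2 are attained, Bergman's gap). -/

import Mathlib

open Filter

section helpers
open List Submodule

namespace BG

variable {α : Type*} [Fintype α] [DecidableEq α] [Inhabited α]

set_option linter.unusedSectionVars false
set_option linter.unusedVariables false

/-- `w` has period `t` on the index interval `[a, c)`. -/
def Period (w : ℕ → α) (t a c : ℕ) : Prop := ∀ i, a ≤ i → i + t < c → w (i + t) = w i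

lemma merge {w : ℕ → α} {t t' a c a' d : ℕ} (ht : 1 ≤ t)
    (h1 : Period w t a c) (h2 : Period w t' a' d)
    (haa : a ≤ a') (hcd : c ≤ d) (hov : a' + t + t' ≤ c) :
    Period w t' a d := by
  have aux : ∀ k i, a' - i ≤ k → a ≤ i → i + t' < d → w (i + t') = w i := by
    intro k
    induction k with
    | zero =>
      intro i hk hai hid
      exact h2 i (by omega) hid
    | succ k ih =>
      intro i hk hai hid
      by_cases hia : a' ≤ i
      · exact h2 i hia hid
      · push_neg at hia
        have e1 : w (i + t) = w i := h1 i hai (by omega)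
        have e2 : w (i + t' + t) = w (i + t') := h1 (i + t') (by omega) (by omega)
        have e3 : w (i + t + t') = w (i + t) := ih (i + t) (by omega) (by omega) (by omega)
        calc w (i + t') = w (i + t' + t) := (e2).symm
          _ = w (i + t + t') := congrArg w (by omega)
          _ = w (i + t) := e3
          _ = w i := e1
  intro i hai hid
  exact aux (a' - i) i le_rfl hai hid

/-- all words of a given length, as a `Finset`. -/
def allW (α : Type*) [Fintype α] [DecidableEq α] (n : ℕ) : Finset (List α) :=
  (Finset.univ : Finset (Fin n → α)).image List.ofFn

lemma mem_allW {n : ℕ} {l : List α} : l ∈ allW α n ↔ l.length = n := by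
  simp only [allW, Finset.mem_image]
  constructor
  · rintro ⟨f, -, rfl⟩; simp
  · rintro rfl
    exact ⟨fun i => l[(i : ℕ)], Finset.mem_univ _, List.ofFn_getElem⟩

lemma card_allW (n : ℕ) : (allW α n).card ≤ (Fintype.card α) ^ n := by
  calc (allW α n).card ≤ (Finset.univ : Finset (Fin n → α)).card := Finset.card_image_le
    _ = (Fintype.card α) ^ n := by simp

open Classical in
/-- normal words of length `n`. -/
noncomputable def NW (N : List α → Prop) (n : ℕ) : Finset (List α) := (allW α n).filter N

lemma mem_NW {N : List α → Prop} {n : ℕ} {l : List α} :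
    l ∈ NW N n ↔ l.length = n ∧ N l := by
  classical
  simp only [NW, Finset.mem_filter, mem_allW]

/-- the function associated to a word. -/
def wf (l : List α) : ℕ → α := fun i => l.getD i default

lemma wf_eq (l : List α) {i : ℕ} (h : i < l.length) : wf l i = l[i] :=
  List.getD_eq_getElem l default h

lemma wf_some (l : List α) {i : ℕ} (h : i < l.length) : l[i]? = some (wf l i) := by
  rw [List.getElem?_eq_getElem h, wf_eq l h]

variable {N : List α → Prop}

/-- the window of length `j` at position `a`. -/
def win (l : List α) (a j : ℕ) : List α := List.ofFn fun i : Fin j => wf l (a + i)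

lemma win_length (l : List α) (a j : ℕ) : (win l a j).length = j := by simp [win]

lemma win_mem (hfac : ∀ u v s : List α, N (u ++ v ++ s) → N v)
    {l : List α} (hl : N l) {a j : ℕ} (ha : a + j ≤ l.length) :
    win l a j ∈ NW N j := by
  have hwin : win l a j = (l.drop a).take j := by
    apply List.ext_getElem
    · rw [win_length, List.length_take, List.length_drop]; omega
    · intro i h1 h2
      simp only [win, List.getElem_ofFn]
      rw [List.getElem_take, List.getElem_drop]
      have h1' : i < j := by simpa [win_length] using h1
      exact wf_eq l (by omega)
  refine mem_NW.2 ⟨win_length l a j, ?_⟩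
  have hdecomp : l.take a ++ (l.drop a).take j ++ l.drop (a + j) = l := by
    have h2 : (l.drop a).drop j = l.drop (a + j) := by
      rw [List.drop_drop]
    rw [List.append_assoc, ← h2, List.take_append_drop j (l.drop a),
      List.take_append_drop a l]
  rw [hwin]
  exact hfac _ _ _ (by rwa [hdecomp])

lemma pigeon (hfac : ∀ u v s : List α, N (u ++ v ++ s) → N v)
    {j m : ℕ} (hm : (NW N j).card ≤ m) {l : List α} (hl : N l)
    {s₀ : ℕ} (hs : s₀ + (m + j) ≤ l.length) :
    ∃ a t, s₀ ≤ a ∧ 1 ≤ t ∧ a + t ≤ s₀ + m ∧ Period (wf l) t a (a + j + t) := by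
  have hmap : ∀ q ∈ Finset.Icc s₀ (s₀ + m), win l q j ∈ NW N j := by
    intro q hq
    rw [Finset.mem_Icc] at hq
    exact win_mem hfac hl (by omega)
  have hcard : (NW N j).card < (Finset.Icc s₀ (s₀ + m)).card := by
    rw [Nat.card_Icc]; omega
  obtain ⟨x, hx, y, hy, hxy, hfxy⟩ :=
    Finset.exists_ne_map_eq_of_card_lt_of_maps_to hcard hmap
  rw [Finset.mem_Icc] at hx hy
  have main : ∀ x y : ℕ, s₀ ≤ x → x ≤ s₀ + m → y ≤ s₀ + m → x < y →
      win l x j = win l y j →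
      ∃ a t, s₀ ≤ a ∧ 1 ≤ t ∧ a + t ≤ s₀ + m ∧ Period (wf l) t a (a + j + t) := by
    intro x y hx1 hx2 hy2 hlt heq
    have hfg := List.ofFn_inj.1 heq
    refine ⟨x, y - x, hx1, by omega, by omega, ?_⟩
    intro i hai hic
    have hij : i - x < j := by omega
    have := congrFun hfg ⟨i - x, hij⟩
    simp only at this
    have hx' : x + (i - x) = i := by omega
    have hy' : y + (i - x) = i + (y - x) := by omega
    rw [hx', hy'] at this
    exact this.symm
  rcases Nat.lt_or_ge x y with hlt | hge
  · exact main x y hx.1 hx.2 hy.2 hlt hfxy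
  · exact main y x hy.1 hy.2 hx.2 (by omega) hfxy.symm

lemma chain (hfac : ∀ u v s : List α, N (u ++ v ++ s) → N v)
    {j m : ℕ} (h1m : 1 ≤ m) (hm : (NW N j).card ≤ m) (hj : 10 * m + 10 ≤ j)
    {l : List α} (hl : N l) (hn : m + j ≤ l.length) :
    ∃ a t c, a ≤ m ∧ 1 ≤ t ∧ t ≤ m ∧ l.length ≤ c + 2 * j ∧ Period (wf l) t a c := by
  set g := j - 3 * m with hg
  have hg1 : 1 ≤ g := by omega
  have key : ∀ q, q * g + (m + j) ≤ l.length →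
      ∃ a t c, a ≤ m ∧ 1 ≤ t ∧ t ≤ m ∧ q * g + j ≤ c ∧ c ≤ q * g + 2 * m + j ∧
        Period (wf l) t a c := by
    intro q
    induction q with
    | zero =>
      intro hq
      obtain ⟨a, t, ha0, ht1, hatm, hper⟩ := pigeon hfac hm hl (s₀ := 0) (by omega)
      exact ⟨a, t, a + j + t, by omega, ht1, by omega, by omega, by omega, hper⟩
    | succ q ih =>
      intro hq
      have hqq : (q + 1) * g = q * g + g := by ring
      obtain ⟨a, t, c, ham, ht1, htm, hcl, hcu, hper⟩ := ih (by omega)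
      obtain ⟨a', t', ha's, ht'1, ha'tm, hper'⟩ :=
        pigeon hfac hm hl (s₀ := (q + 1) * g) (by omega)
      rw [hqq] at ha's ha'tm
      have hmerge : Period (wf l) t' a (a' + j + t') :=
        merge ht1 hper hper' (by omega) (by omega) (by omega)
      exact ⟨a, t', a' + j + t', ham, ht'1, by omega, by omega, by omega, hmerge⟩
  set D := l.length - (m + j) with hD
  have hdm := Nat.div_add_mod D g
  have hmod : D % g < g := Nat.mod_lt _ (by omega)
  have hcm : (D / g) * g = g * (D / g) := Nat.mul_comm _ _
  obtain ⟨a, t, c, ham, ht1, htm, hcl, hcu, hper⟩ := key (D / g) (by omega)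
  exact ⟨a, t, c, ham, ht1, htm, by omega, hper⟩

theorem core_bound (hfac : ∀ u v s : List α, N (u ++ v ++ s) → N v)
    {j m : ℕ} (h1m : 1 ≤ m) (hm : (NW N j).card ≤ m) (hj : 10 * m + 10 ≤ j)
    {n : ℕ} (hn : 4 * j ≤ n) :
    (NW N n).card ≤ (m + 1) * m * ((Fintype.card α) ^ (2*j) * (Fintype.card α) ^ (2*j)) := by
  classical
  set B := (Finset.Icc 0 m ×ˢ Finset.Icc 1 m) with hB
  set S : ℕ × ℕ → Finset (List α) := fun p =>
    (NW N n).filter (fun l => ∃ c, l.length ≤ c + 2 * j ∧ Period (wf l) p.2 p.1 c) with hS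
  have hsub : NW N n ⊆ B.biUnion S := by
    intro l hl
    obtain ⟨hlen, hNl⟩ := mem_NW.1 hl
    obtain ⟨a, t, c, ham, ht1, htm, hlc, hper⟩ := chain hfac h1m hm hj hNl (by omega)
    refine Finset.mem_biUnion.2 ⟨(a, t), ?_, ?_⟩
    · simp only [hB, Finset.mem_product, Finset.mem_Icc]; omega
    · exact Finset.mem_filter.2 ⟨hl, c, hlc, hper⟩
  have hScard : ∀ p ∈ B, (S p).card ≤ (Fintype.card α) ^ (2*j) * (Fintype.card α) ^ (2*j) := by
    rintro ⟨a, t⟩ hp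
    simp only [hB, Finset.mem_product, Finset.mem_Icc] at hp
    have hinj : Set.InjOn (fun l : List α => (l.take (2*j), l.drop (n - 2*j))) (S (a,t)) := by
      intro l hl l' hl' heq
      simp only [hS, Finset.mem_coe, Finset.mem_filter] at hl hl'
      obtain ⟨hlN, c, hc, hper⟩ := hl
      obtain ⟨hl'N, c', hc', hper'⟩ := hl'
      have hlen : l.length = n := (mem_NW.1 hlN).1
      have hlen' : l'.length = n := (mem_NW.1 hl'N).1
      have htake : l.take (2*j) = l'.take (2*j) := congrArg Prod.fst heq
      have hdrop : l.drop (n - 2*j) = l'.drop (n - 2*j) := congrArg Prod.snd heq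
      have key : ∀ i : ℕ, l[i]? = l'[i]? := by
        intro i
        induction i using Nat.strong_induction_on with
        | _ i IH =>
          by_cases hin : i < n
          · by_cases hsmall : i < 2 * j
            · have e1 : (l.take (2*j))[i]? = l[i]? := by
                simp [List.getElem?_take, hsmall]
              have e2 : (l'.take (2*j))[i]? = l'[i]? := by
                simp [List.getElem?_take, hsmall]
              rw [htake] at e1
              exact e1.symm.trans e2
            · by_cases hbig : n - 2*j ≤ i
              · have e1 : (l.drop (n - 2*j))[i - (n - 2*j)]? = l[(n - 2*j) + (i - (n - 2*j))]? := List.getElem?_drop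
                have e2 : (l'.drop (n - 2*j))[i - (n - 2*j)]? = l'[(n - 2*j) + (i - (n - 2*j))]? := List.getElem?_drop
                rw [hdrop] at e1
                have harith : (n - 2*j) + (i - (n - 2*j)) = i := by omega
                rw [harith] at e1 e2
                exact e1.symm.trans e2
              · push_neg at hsmall hbig
                have hcl : i < c := by omega
                have hcl' : i < c' := by omega
                have p1 : wf l ((i - t) + t) = wf l (i - t) :=
                  hper (i - t) (by omega) (by omega)
                have p2 : wf l' ((i - t) + t) = wf l' (i - t) :=
                  hper' (i - t) (by omega) (by omega)
                have hit : (i - t) + t = i := by omega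
                rw [hit] at p1 p2
                calc l[i]? = some (wf l i) := wf_some l (by omega)
                  _ = some (wf l (i - t)) := by rw [p1]
                  _ = l[i - t]? := (wf_some l (by omega)).symm
                  _ = l'[i - t]? := IH (i - t) (by omega)
                  _ = some (wf l' (i - t)) := wf_some l' (by omega)
                  _ = some (wf l' i) := by rw [p2]
                  _ = l'[i]? := (wf_some l' (by omega)).symm
          · rw [List.getElem?_eq_none (by omega), List.getElem?_eq_none (by omega)]
      exact List.ext_getElem? key
    calc (S (a,t)).card ≤ ((allW α (2*j)) ×ˢ (allW α (2*j))).card := by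
          apply Finset.card_le_card_of_injOn _ _ hinj
          intro l hl
          simp only [hS, Finset.mem_coe, Finset.mem_filter] at hl ⊢
          have hlen : l.length = n := (mem_NW.1 hl.1).1
          refine Finset.mem_product.2 ⟨mem_allW.2 ?_, mem_allW.2 ?_⟩
          · simp; omega
          · simp; omega
      _ = (allW α (2*j)).card * (allW α (2*j)).card := Finset.card_product _ _
      _ ≤ (Fintype.card α) ^ (2*j) * (Fintype.card α) ^ (2*j) :=
          Nat.mul_le_mul (card_allW _) (card_allW _)
  calc (NW N n).card ≤ (B.biUnion S).card := Finset.card_le_card hsub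
    _ ≤ ∑ p ∈ B, (S p).card := Finset.card_biUnion_le
    _ ≤ B.card * ((Fintype.card α) ^ (2*j) * (Fintype.card α) ^ (2*j)) := by
        simpa [smul_eq_mul] using Finset.sum_le_card_nsmul B _ _ hScard
    _ = (m + 1) * m * ((Fintype.card α) ^ (2*j) * (Fintype.card α) ^ (2*j)) := by
        simp [hB, Finset.card_product, Nat.card_Icc]


section Enc
variable {r : ℕ}

def stepE (r : ℕ) (acc : ℕ) (i : Fin r) : ℕ := acc * (r+1) + ((i:ℕ)+1)

def Ee (r : ℕ) (l : List (Fin r)) : ℕ := l.foldl (stepE r) 0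

lemma foldlE (l : List (Fin r)) : ∀ acc, l.foldl (stepE r) acc = acc * (r+1)^l.length + Ee r l := by
  induction l with
  | nil => intro acc; simp [Ee]
  | cons a l ih =>
    intro acc
    simp only [List.foldl_cons, List.length_cons, Ee] at *
    rw [ih, ih (stepE r 0 a)]
    simp only [stepE]
    ring

lemma E_nil : Ee r ([] : List (Fin r)) = 0 := rfl

lemma E_cons (a : Fin r) (l : List (Fin r)) :
    Ee r (a :: l) = ((a:ℕ)+1) * (r+1)^l.length + Ee r l := by
  show List.foldl (stepE r) 0 (a :: l) = _
  rw [List.foldl_cons, foldlE]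
  simp [stepE]

lemma E_append (u v : List (Fin r)) :
    Ee r (u ++ v) = Ee r u * (r+1)^v.length + Ee r v := by
  show List.foldl (stepE r) 0 (u ++ v) = _
  rw [List.foldl_append, foldlE]
  rfl

lemma E_lt (l : List (Fin r)) : Ee r l < (r+1)^l.length := by
  induction l with
  | nil => simp [E_nil]
  | cons a l ih =>
    rw [E_cons]
    have h1 : ((a:ℕ)+1) * (r+1)^l.length + Ee r l < ((a:ℕ)+1) * (r+1)^l.length + (r+1)^l.length := by
      omega
    have h2 : ((a:ℕ)+1) * (r+1)^l.length + (r+1)^l.length = ((a:ℕ)+2) * (r+1)^l.length := by ring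
    have h3 : ((a:ℕ)+2) * (r+1)^l.length ≤ (r+1) * (r+1)^l.length := by
      have : (a:ℕ) + 2 ≤ r + 1 := by omega
      exact Nat.mul_le_mul_right _ this
    have h4 : (r+1) * (r+1)^l.length = (r+1)^(a :: l).length := by
      rw [List.length_cons, pow_succ]; ring
    omega

lemma E_ge (l : List (Fin r)) (h : l ≠ []) : (r+1)^(l.length - 1) ≤ Ee r l := by
  cases l with
  | nil => exact absurd rfl h
  | cons a l =>
    rw [E_cons]
    have : 1 * (r+1)^l.length ≤ ((a:ℕ)+1) * (r+1)^l.length :=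
      Nat.mul_le_mul_right _ (by omega)
    simpa using Nat.le_add_right_of_le (by simpa using this)

lemma len_le_of_E_le {x v : List (Fin r)} (h : Ee r x ≤ Ee r v) : x.length ≤ v.length := by
  by_contra hc
  push_neg at hc
  have hx : x ≠ [] := by
    intro h0; rw [h0] at hc; simp at hc
  have h1 : (r+1)^(x.length - 1) ≤ Ee r x := E_ge x hx
  have h2 : Ee r v < (r+1)^v.length := E_lt v
  have h3 : (r+1)^v.length ≤ (r+1)^(x.length - 1) :=
    Nat.pow_le_pow_right (by omega) (by omega)
  omega

lemma E_inj : Function.Injective (Ee r) := by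
  intro x
  induction x with
  | nil =>
    intro y h
    cases y with
    | nil => rfl
    | cons b y =>
      exfalso
      have := E_ge (b :: y) (by simp)
      have h2 : (0:ℕ) < (r+1)^((b::y).length - 1) := Nat.pow_pos (by omega)
      rw [E_nil] at h
      omega
  | cons a x ih =>
    intro y h
    cases y with
    | nil =>
      exfalso
      have := E_ge (a :: x) (by simp)
      have h2 : (0:ℕ) < (r+1)^((a::x).length - 1) := Nat.pow_pos (by omega)
      rw [E_nil] at h
      omega
    | cons c y =>
      have hlen : (a :: x).length = (c :: y).length :=
        le_antisymm (len_le_of_E_le h.le) (len_le_of_E_le h.ge)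
      simp only [List.length_cons, Nat.add_right_cancel_iff] at hlen
      rw [E_cons, E_cons, hlen] at h
      set P := (r+1)^y.length with hP
      have hEx : Ee r x < P := by rw [hP, ← hlen]; exact E_lt x
      have hEy : Ee r y < P := E_lt y
      have hac : (a : ℕ) = (c : ℕ) := by
        rcases Nat.lt_trichotomy (a:ℕ) (c:ℕ) with hlt | heq | hgt
        · exfalso
          have e1 : ((a:ℕ)+1) * P + P ≤ ((c:ℕ)+1) * P := by
            have : ((a:ℕ)+1) * P + P = ((a:ℕ)+2) * P := by ring
            rw [this]
            exact Nat.mul_le_mul_right _ (by omega)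
          omega
        · exact heq
        · exfalso
          have e1 : ((c:ℕ)+1) * P + P ≤ ((a:ℕ)+1) * P := by
            have : ((c:ℕ)+1) * P + P = ((c:ℕ)+2) * P := by ring
            rw [this]
            exact Nat.mul_le_mul_right _ (by omega)
          omega
      have hEq : Ee r x = Ee r y := by
        have : ((a:ℕ)+1) * P = ((c:ℕ)+1) * P := by rw [hac]
        omega
      have hxy : x = y := ih hEq
      have : a = c := Fin.ext hac
      rw [this, hxy]

lemma E_concat_lt {x v : List (Fin r)} (u s : List (Fin r)) (h : Ee r x < Ee r v) :
    Ee r (u ++ x ++ s) < Ee r (u ++ v ++ s) := by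
  have hlen : x.length ≤ v.length := len_le_of_E_le h.le
  rw [E_append (u ++ x) s, E_append (u ++ v) s, E_append u x, E_append u v]
  have hs : (0:ℕ) < (r+1)^s.length := Nat.pow_pos (by omega)
  have inner : Ee r u * (r+1)^x.length + Ee r x < Ee r u * (r+1)^v.length + Ee r v := by
    rcases eq_or_lt_of_le hlen with heq | hlt
    · rw [heq]; omega
    · have hvne : v ≠ [] := by
        intro h0; rw [h0] at hlt; simp at hlt
      have h1 : Ee r x < (r+1)^x.length := E_lt x
      have h2 : (r+1)^(v.length - 1) ≤ Ee r v := E_ge v hvne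
      have h3 : (r+1)^x.length ≤ (r+1)^(v.length - 1) :=
        Nat.pow_le_pow_right (by omega) (by omega)
      have h4 : (r+1)^(v.length - 1) ≤ (r+1)^v.length :=
        Nat.pow_le_pow_right (by omega) (by omega)
      have h5 : Ee r u * (r+1)^x.length ≤ Ee r u * (r+1)^(v.length - 1) :=
        Nat.mul_le_mul_left _ h3
      have h6 : Ee r u * (r+1)^(v.length - 1) ≤ Ee r u * (r+1)^v.length :=
        Nat.mul_le_mul_left _ h4
      omega
  calc (Ee r u * (r+1)^x.length + Ee r x) * (r+1)^s.length + Ee r s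
      < (Ee r u * (r+1)^v.length + Ee r v) * (r+1)^s.length + Ee r s := by
        have := (Nat.mul_lt_mul_right hs).2 inner
        omega
    _ = _ := rfl

end Enc

section Alg

variable (k : Type*) {A : Type*} [Field k] [Ring A] [Algebra k A]
variable {r : ℕ} (b : Fin r → A)

/-- the product of the letters of a word. -/
def valw (l : List (Fin r)) : A := (l.map b).prod

lemma valw_nil : valw b ([] : List (Fin r)) = 1 := by simp [valw]

lemma valw_append (u v : List (Fin r)) : valw b (u ++ v) = valw b u * valw b v := by
  simp [valw]

lemma valw_singleton (a : Fin r) : valw b [a] = b a := by simp [valw]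

/-- normal words: value not in the span of values of smaller words. -/
def Nml (l : List (Fin r)) : Prop :=
  valw b l ∉ span k (valw b '' {x | Ee r x < Ee r l})

lemma Nml_fac : ∀ u v s : List (Fin r), Nml k b (u ++ v ++ s) → Nml k b v := by
  intro u v s h
  by_contra hv
  rw [Nml, not_not] at hv
  apply h
  set f : A →ₗ[k] A := (LinearMap.mulRight k (valw b s)).comp (LinearMap.mulLeft k (valw b u)) with hf
  have hfv : ∀ z : A, f z = valw b u * z * valw b s := by intro z; simp [hf]
  have hval : valw b (u ++ v ++ s) = f (valw b v) := by
    rw [valw_append, valw_append, hfv]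
  have h1 : f (valw b v) ∈ Submodule.map f (span k (valw b '' {x | Ee r x < Ee r v})) :=
    Submodule.mem_map_of_mem hv
  rw [Submodule.map_span] at h1
  have h2 : f '' (valw b '' {x | Ee r x < Ee r v}) ⊆
      valw b '' {x | Ee r x < Ee r (u ++ v ++ s)} := by
    rintro _ ⟨_, ⟨x, hx, rfl⟩, rfl⟩
    refine ⟨u ++ x ++ s, E_concat_lt u s hx, ?_⟩
    rw [valw_append, valw_append, hfv]
  rw [hval]
  exact span_mono h2 h1

lemma val_mem_span : ∀ (e : ℕ) (l : List (Fin r)), Ee r l ≤ e →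
    valw b l ∈ span k (valw b '' {x | Nml k b x ∧ Ee r x ≤ Ee r l}) := by
  intro e
  induction e using Nat.strong_induction_on with
  | _ e ih =>
    intro l hle
    by_cases hN : Nml k b l
    · exact subset_span ⟨l, ⟨hN, le_rfl⟩, rfl⟩
    · rw [Nml, not_not] at hN
      refine span_le.2 ?_ hN
      rintro _ ⟨x, hx, rfl⟩
      have hx' : Ee r x < Ee r l := hx
      have h1 := ih (Ee r x) (by omega) x le_rfl
      have h2 : (valw b '' {y | Nml k b y ∧ Ee r y ≤ Ee r x}) ⊆
          (valw b '' {y | Nml k b y ∧ Ee r y ≤ Ee r l}) := by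
        rintro _ ⟨y, ⟨hy1, hy2⟩, rfl⟩
        exact ⟨y, ⟨hy1, by omega⟩, rfl⟩
      exact span_mono h2 h1

end Alg

section Count

variable (k : Type*) {A : Type*} [Field k] [Ring A] [Algebra k A]
variable {r : ℕ} (b : Fin r → A)

variable [Inhabited (Fin r)]

/-- normal words of length at most `n`. -/
noncomputable def NL (n : ℕ) : Finset (List (Fin r)) :=
  (Finset.range (n+1)).biUnion (fun i => NW (Nml k b) i)

lemma mem_NL {n : ℕ} {l : List (Fin r)} :
    l ∈ NL k b n ↔ l.length ≤ n ∧ Nml k b l := by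
  simp only [NL, Finset.mem_biUnion, Finset.mem_range, mem_NW]
  constructor
  · rintro ⟨i, hi, hlen, hN⟩
    exact ⟨by omega, hN⟩
  · rintro ⟨hlen, hN⟩
    exact ⟨l.length, by omega, rfl, hN⟩

lemma card_NL (n : ℕ) : (NL k b n).card = ∑ i ∈ Finset.range (n+1), (NW (Nml k b) i).card := by
  classical
  apply Finset.card_biUnion
  intro i hi i' hi' hne
  rw [Function.onFun, Finset.disjoint_left]
  intro l hl hl'
  exact hne ((mem_NW.1 hl).1 ▸ (mem_NW.1 hl').1.symm ▸ rfl)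

lemma NL_indep (n : ℕ) :
    LinearIndependent k (fun l : (NL k b n : Finset (List (Fin r))) => valw b (l : List (Fin r))) := by
  rw [Fintype.linearIndependent_iff]
  intro g hg
  by_contra hne
  push_neg at hne
  obtain ⟨i₁, hi₁⟩ := hne
  classical
  set sup := Finset.univ.filter (fun i : (NL k b n : Finset (List (Fin r))) => g i ≠ 0) with hsup
  have hsne : sup.Nonempty := ⟨i₁, Finset.mem_filter.2 ⟨Finset.mem_univ _, hi₁⟩⟩
  obtain ⟨x₀, hx₀s, hmax⟩ := Finset.exists_max_image sup (fun i => Ee r (i : List (Fin r))) hsne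
  have hg0 : g x₀ ≠ 0 := (Finset.mem_filter.1 hx₀s).2
  have hx₀Nm : Nml k b (x₀ : List (Fin r)) := ((mem_NL k b).1 x₀.2).2
  apply hx₀Nm
  have hsum := hg
  rw [← Finset.add_sum_erase Finset.univ _ (Finset.mem_univ x₀)] at hsum
  have hrearr : valw b (x₀ : List (Fin r)) =
      (g x₀)⁻¹ • (- ∑ i ∈ Finset.univ.erase x₀, g i • valw b (i : List (Fin r))) := by
    have h1 : g x₀ • valw b (x₀ : List (Fin r)) =
        - ∑ i ∈ Finset.univ.erase x₀, g i • valw b (i : List (Fin r)) :=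
      eq_neg_of_add_eq_zero_left hsum
    rw [← h1, inv_smul_smul₀ hg0]
  rw [hrearr]
  apply Submodule.smul_mem
  apply Submodule.neg_mem
  apply Submodule.sum_mem
  intro i hi
  by_cases hgi : g i = 0
  · rw [hgi, zero_smul]; exact Submodule.zero_mem _
  · apply Submodule.smul_mem
    apply subset_span
    have his : i ∈ sup := Finset.mem_filter.2 ⟨Finset.mem_univ _, hgi⟩
    have hile := hmax i his
    have hinex : i ≠ x₀ := Finset.ne_of_mem_erase hi
    have hcoene : (i : List (Fin r)) ≠ (x₀ : List (Fin r)) := fun hc => hinex (Subtype.ext hc)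
    have hEne : Ee r (i : List (Fin r)) ≠ Ee r (x₀ : List (Fin r)) := fun hc => hcoene (E_inj hc)
    have hile' : Ee r (i : List (Fin r)) ≤ Ee r (x₀ : List (Fin r)) := hile
    exact ⟨i, lt_of_le_of_ne hile' hEne, rfl⟩

variable {V : Submodule k A}

lemma pow_span (hVb : V = span k (Set.range b)) :
    ∀ i : ℕ, V ^ i = span k (valw b '' {l : List (Fin r) | l.length = i}) := by
  intro i
  induction i with
  | zero =>
    rw [pow_zero]
    have h1 : {l : List (Fin r) | l.length = 0} = {([] : List (Fin r))} := by
      ext l; simp [List.length_eq_zero_iff]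
    rw [h1, Set.image_singleton, valw_nil]
    exact Submodule.one_eq_span
  | succ i ih =>
    rw [pow_succ, ih, hVb, span_mul_span]
    congr 1
    ext z
    constructor
    · rintro ⟨x, ⟨lx, hlx, rfl⟩, y, ⟨a, rfl⟩, rfl⟩
      refine ⟨lx ++ [a], by simp only [Set.mem_setOf_eq] at hlx ⊢; simp [hlx], ?_⟩
      show valw b (lx ++ [a]) = valw b lx * b a
      rw [valw_append, valw_singleton]
    · rintro ⟨l, hl, rfl⟩
      have hlne : l ≠ [] := by
        intro h0; rw [h0] at hl; simp at hl
      have hdec : l.dropLast ++ [l.getLast hlne] = l := List.dropLast_append_getLast hlne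
      refine ⟨valw b l.dropLast, ⟨l.dropLast, ?_, rfl⟩, b (l.getLast hlne), ⟨_, rfl⟩, ?_⟩
      · have := @List.length_dropLast _ l
        simp only [Set.mem_setOf_eq] at hl ⊢
        omega
      · show valw b l.dropLast * b (l.getLast hlne) = valw b l
        rw [← valw_singleton b (l.getLast hlne), ← valw_append, hdec]

lemma F_eq_span (hVb : V = span k (Set.range b)) (n : ℕ) :
    (⨆ i ∈ Finset.range (n+1), V ^ i) =
      span k (valw b '' {l : List (Fin r) | l.length ≤ n}) := by
  have h1 : (⨆ i ∈ Finset.range (n+1), V ^ i) =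
      ⨆ i ∈ Finset.range (n+1), span k (valw b '' {l : List (Fin r) | l.length = i}) := by
    apply iSup_congr
    intro i
    apply iSup_congr
    intro hi
    exact pow_span k b hVb i
  rw [h1, ← Submodule.span_iUnion₂]
  congr 1
  ext z
  simp only [Set.mem_iUnion, Finset.mem_range, Set.mem_image, Set.mem_setOf_eq]
  constructor
  · rintro ⟨i, hi, l, hl, rfl⟩
    exact ⟨l, by omega, rfl⟩
  · rintro ⟨l, hl, rfl⟩
    exact ⟨l.length, by omega, l, rfl, rfl⟩

lemma F_eq_span_norm (hVb : V = span k (Set.range b)) (n : ℕ) :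
    (⨆ i ∈ Finset.range (n+1), V ^ i) =
      span k (valw b '' {l : List (Fin r) | Nml k b l ∧ l.length ≤ n}) := by
  rw [F_eq_span k b hVb n]
  apply _root_.le_antisymm
  · rw [span_le]
    rintro _ ⟨l, hl, rfl⟩
    have h1 := val_mem_span k b (Ee r l) l le_rfl
    have h2 : (valw b '' {y | Nml k b y ∧ Ee r y ≤ Ee r l}) ⊆
        (valw b '' {y : List (Fin r) | Nml k b y ∧ y.length ≤ n}) := by
      rintro _ ⟨y, ⟨hy1, hy2⟩, rfl⟩
      have := len_le_of_E_le hy2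
      exact ⟨y, ⟨hy1, by simp only [Set.mem_setOf_eq] at hl; omega⟩, rfl⟩
    exact span_mono h2 h1
  · exact span_mono (Set.image_mono (fun y hy => hy.2))

lemma finrank_F (hVb : V = span k (Set.range b)) (n : ℕ) :
    Module.finrank k (⨆ i ∈ Finset.range (n+1), V ^ i : Submodule k A) = (NL k b n).card := by
  have hr : Set.range (fun l : (NL k b n : Finset (List (Fin r))) => valw b (l : List (Fin r)))
      = valw b '' {l : List (Fin r) | Nml k b l ∧ l.length ≤ n} := by
    ext z
    simp only [Set.mem_range, Set.mem_image, Set.mem_setOf_eq]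
    constructor
    · rintro ⟨⟨l, hl⟩, rfl⟩
      obtain ⟨h1, h2⟩ := (mem_NL k b).1 hl
      exact ⟨l, ⟨h2, h1⟩, rfl⟩
    · rintro ⟨l, ⟨h1, h2⟩, rfl⟩
      exact ⟨⟨l, (mem_NL k b).2 ⟨h2, h1⟩⟩, rfl⟩
  rw [F_eq_span_norm k b hVb n, ← hr, finrank_span_eq_card (NL_indep k b n)]
  simp [Fintype.card_coe]

lemma growth_linear {j m : ℕ} (h1m : 1 ≤ m)
    (hm : (NW (Nml k b) j).card ≤ m) (hj : 10*m+10 ≤ j) :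
    ∀ n, 4*j ≤ n → (NL k b n).card ≤
      (NL k b (4*j)).card + ((m+1)*m*(r^(2*j)*r^(2*j))) * (n - 4*j) := by
  have hfac := Nml_fac k b
  have hcore : ∀ n, 4*j ≤ n → (NW (Nml k b) n).card ≤ (m+1)*m*(r^(2*j)*r^(2*j)) := by
    intro n hn
    have := core_bound (N := Nml k b) hfac h1m hm hj hn
    rwa [Fintype.card_fin] at this
  intro n hn
  induction n, hn using Nat.le_induction with
  | base => simp
  | succ n hn ih =>
    have e1 : (NL k b (n+1)).card = (NL k b n).card + (NW (Nml k b) (n+1)).card := by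
      rw [card_NL, card_NL, Finset.sum_range_succ]
    have e2 := hcore (n+1) (by omega)
    have e3 : (m+1)*m*(r^(2*j)*r^(2*j)) * (n + 1 - 4*j) =
        (m+1)*m*(r^(2*j)*r^(2*j)) * (n - 4*j) + (m+1)*m*(r^(2*j)*r^(2*j)) := by
      rw [show n + 1 - 4*j = (n - 4*j) + 1 by omega]
      ring
    omega


end Count

section Filt

variable {k A : Type*} [Field k] [Ring A] [Algebra k A]

/-- the filtration as a Finset.sup. -/
lemma F_as_sup (V : Submodule k A) (n : ℕ) :
    (⨆ i ∈ Finset.range (n+1), V ^ i) = (Finset.range (n+1)).sup (fun i => V ^ i) :=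
  (Finset.sup_eq_iSup _ _).symm

lemma F_fg (V : Submodule k A) [FiniteDimensional k V] (n : ℕ) :
    (⨆ i ∈ Finset.range (n+1), V ^ i : Submodule k A).FG := by
  rw [F_as_sup]
  apply Submodule.fg_finset_sup
  have pow_fg : ∀ i : ℕ, (V ^ i : Submodule k A).FG := by
    intro i
    induction i with
    | zero => rw [pow_zero]; rw [Submodule.one_eq_span]; exact Submodule.fg_span_singleton 1
    | succ i ih =>
      rw [pow_succ]
      exact Submodule.FG.mul ih ((Submodule.fg_iff_finiteDimensional V).2 inferInstance)
  exact fun i _ => pow_fg i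

lemma F_fd (V : Submodule k A) [FiniteDimensional k V] (n : ℕ) :
    FiniteDimensional k (⨆ i ∈ Finset.range (n+1), V ^ i : Submodule k A) :=
  (Submodule.fg_iff_finiteDimensional _).1 (F_fg V n)

lemma F_mono (V : Submodule k A) {n m : ℕ} (h : n ≤ m) :
    (⨆ i ∈ Finset.range (n+1), V ^ i : Submodule k A) ≤ ⨆ i ∈ Finset.range (m+1), V ^ i := by
  rw [F_as_sup, F_as_sup]
  exact Finset.sup_mono (by intro x hx; simp only [Finset.mem_range] at *; omega)

lemma F_succ_eq (V : Submodule k A) (n : ℕ) :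
    (⨆ i ∈ Finset.range (n+2), V ^ i : Submodule k A) =
      V ^ (n+1) ⊔ ⨆ i ∈ Finset.range (n+1), V ^ i := by
  rw [F_as_sup, F_as_sup, Finset.range_add_one (n := n+1), Finset.sup_insert]

lemma F_mul_le (V : Submodule k A) (n : ℕ) :
    (⨆ i ∈ Finset.range (n+1), V ^ i : Submodule k A) * V ≤
      ⨆ i ∈ Finset.range (n+2), V ^ i := by
  rw [F_as_sup, F_as_sup]
  have gen : ∀ s : Finset ℕ, (s ⊆ Finset.range (n+1)) →
      (s.sup (fun i => V ^ i)) * V ≤ (Finset.range (n+2)).sup (fun i => V ^ i) := by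
    intro s
    induction s using Finset.induction_on with
    | empty => intro _; rw [Finset.sup_empty, Submodule.bot_mul]; exact bot_le
    | insert a s hni ih =>
      intro hsub
      rw [Finset.sup_insert, Submodule.sup_mul]
      apply sup_le
      · have ha : a ∈ Finset.range (n+1) := hsub (Finset.mem_insert_self a s)
        rw [← pow_succ]
        apply Finset.le_sup
        simp only [Finset.mem_range] at *
        omega
      · exact ih (fun x hx => hsub (Finset.mem_insert_of_mem hx))
  exact gen _ (subset_refl _)

lemma F_stab (V : Submodule k A) (n : ℕ)
    (h : (⨆ i ∈ Finset.range (n+2), V ^ i : Submodule k A) ≤ ⨆ i ∈ Finset.range (n+1), V ^ i) :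
    ∀ m, (⨆ i ∈ Finset.range (n+m+1), V ^ i : Submodule k A) = ⨆ i ∈ Finset.range (n+1), V ^ i := by
  intro m
  induction m with
  | zero => rfl
  | succ m ih =>
    apply _root_.le_antisymm
    · have e1 : n + (m+1) + 1 = (n + m) + 2 := by omega
      rw [e1, F_succ_eq]
      apply sup_le
      · have e2 : V ^ (n + m + 1) = V ^ (n + m) * V := pow_succ V (n+m)
        rw [e2]
        have e3 : V ^ (n+m) ≤ ⨆ i ∈ Finset.range (n+m+1), V ^ i := by
          rw [F_as_sup]
          exact Finset.le_sup (by simp)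
        calc V ^ (n+m) * V ≤ (⨆ i ∈ Finset.range (n+m+1), V ^ i : Submodule k A) * V :=
              mul_le_mul' e3 (le_refl V)
          _ = (⨆ i ∈ Finset.range (n+1), V ^ i : Submodule k A) * V := by rw [ih]
          _ ≤ ⨆ i ∈ Finset.range (n+2), V ^ i := F_mul_le V n
          _ ≤ ⨆ i ∈ Finset.range (n+1), V ^ i := h
      · rw [ih]
    · have : n + 1 ≤ n + (m + 1) + 1 := by omega
      exact F_mono V (by omega)

end Filt

section NatPigeon

lemma find_small_j (p : ℕ → ℕ) (d : ℕ → ℕ)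
    (hd : ∀ n, d n = ∑ i ∈ Finset.range (n+1), p i)
    (n : ℕ) (hn : 1000 ≤ n) (hq : 100 * d n < n * n) :
    ∃ j, n / 2 < j ∧ j ≤ n ∧ 10 * p j + 10 ≤ j := by
  by_contra hcon
  push_neg at hcon
  set N := n / 2 with hN
  have hN2 : 2 * N ≤ n := by omega
  have hN2' : n ≤ 2 * N + 1 := by omega
  have hN500 : 500 ≤ N := by omega
  have hlow : ∀ j ∈ Finset.Ioc N n, N ≤ 20 * p j := by
    intro j hj
    rw [Finset.mem_Ioc] at hj
    have := hcon j hj.1 hj.2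
    omega
  have hsum1 : (Finset.Ioc N n).card • N ≤ ∑ j ∈ Finset.Ioc N n, 20 * p j :=
    Finset.card_nsmul_le_sum _ _ _ (fun x hx => hlow x hx)
  have hcard : (Finset.Ioc N n).card = n - N := Nat.card_Ioc N n
  have hsum2 : ∑ j ∈ Finset.Ioc N n, 20 * p j = 20 * ∑ j ∈ Finset.Ioc N n, p j := by
    rw [Finset.mul_sum]
  have hsub : Finset.Ioc N n ⊆ Finset.range (n+1) := by
    intro x hx
    rw [Finset.mem_Ioc] at hx
    rw [Finset.mem_range]
    omega
  have hsum3 : ∑ j ∈ Finset.Ioc N n, p j ≤ d n := by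
    rw [hd n]
    exact Finset.sum_le_sum_of_subset hsub
  have hNN : (n - N) * N ≤ 20 * d n := by
    calc (n - N) * N = (Finset.Ioc N n).card • N := by rw [hcard, smul_eq_mul]
      _ ≤ ∑ j ∈ Finset.Ioc N n, 20 * p j := hsum1
      _ = 20 * ∑ j ∈ Finset.Ioc N n, p j := hsum2
      _ ≤ 20 * d n := by omega
  have hNn : N * N ≤ (n - N) * N := Nat.mul_le_mul_right N (by omega)
  have hnn : n * n ≤ (2*N+1) * (2*N+1) := Nat.mul_le_mul hN2' hN2'
  have hexp : (2*N+1) * (2*N+1) = 4*(N*N) + 4*N + 1 := by ring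
  have hNbig : 500 * N ≤ N * N := Nat.mul_le_mul_right N hN500
  -- now linear in the atom X = N*N
  set X := N * N with hX
  omega

end NatPigeon

end BG


end helpers

set_option maxHeartbeats 1000000 in
/-- Bergman's gap theorem for connected graded algebras.  Let `A` be a connected
`ℕ`-graded `k`-algebra, finitely generated by a finite-dimensional subspace `V` with
`k[V] = A`.  With `FⁿA = k + Σ_{i=1}^n Vⁱ`, the Gelfand–Kirillov dimension is
`GKdim(A) = limsup_n log(dim_k FⁿA)/log n`.  If `GKdim(A) ≤ 2` then
`GKdim(A) ∈ {0, 1, 2}`, and if `GKdim(A) < 2` then `GKdim(A)` is either `0` or `1`: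
no values strictly between `1` and `2` (nor between `0` and `1`) are attained. -/
theorem bergman_gap {k A : Type u} [Field k] [Ring A] [Algebra k A]
    (𝒜 : ℕ → Submodule k A) [GradedAlgebra 𝒜]
    (hconn : 𝒜 0 = (1 : Submodule k A))
    (V : Submodule k A) [FiniteDimensional k V]
    (hgen : Algebra.adjoin k (V : Set A) = ⊤)
    (gk : ℝ)
    (hgk : gk = limsup (fun n : ℕ =>
      Real.log (Module.finrank k (⨆ i ∈ Finset.range (n + 1), V ^ i : Submodule k A)) /
        Real.log n) atTop)
    (hle : gk ≤ 2) :
    gk ∈ ({0, 1, 2} : Set ℝ) ∧ (gk < 2 → gk = 0 ∨ gk = 1) := by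
  classical
  set d : ℕ → ℕ :=
    fun n => Module.finrank k (⨆ i ∈ Finset.range (n + 1), V ^ i : Submodule k A) with hdd
  set f : ℕ → ℝ := fun n => Real.log (d n) / Real.log n with hff
  have hgkf : gk = limsup f atTop := by
    rw [hgk]
  suffices hh : gk = 0 ∨ gk = 1 ∨ gk = 2 by
    constructor
    · rcases hh with h|h|h <;> simp [h]
    · intro hlt2
      rcases hh with h|h|h
      · exact Or.inl h
      · exact Or.inr h
      · exfalso; rw [h] at hlt2; exact lt_irrefl _ hlt2
  by_cases hstab : ∃ n, (⨆ i ∈ Finset.range (n+2), V ^ i : Submodule k A) ≤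
      ⨆ i ∈ Finset.range (n+1), V ^ i
  -- Case A : the filtration stabilizes, gk = 0.
  · left
    obtain ⟨nn, hnn⟩ := hstab
    have hstabm := BG.F_stab V nn hnn
    have hdconst : ∀ i, d (nn + i) = d nn := by
      intro i
      rw [hdd]
      simp only
      rw [hstabm i]
    have hftend : Tendsto f atTop (nhds 0) := by
      have h0 : Tendsto (fun n : ℕ => Real.log (d nn) / Real.log n) atTop (nhds 0) :=
        Filter.Tendsto.div_atTop tendsto_const_nhds
          (Real.tendsto_log_atTop.comp tendsto_natCast_atTop_atTop)
      apply h0.congr'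
      filter_upwards [eventually_ge_atTop nn] with n hn
      have he : d n = d nn := by
        have := hdconst (n - nn)
        rwa [show nn + (n - nn) = n by omega] at this
      rw [hff]
      simp only
      rw [he]
    rw [hgkf]
    exact hftend.limsup_eq
  -- Case B : the filtration grows strictly.
  · push_neg at hstab
    haveI hFD : ∀ n : ℕ, FiniteDimensional k
        (⨆ i ∈ Finset.range (n+1), V ^ i : Submodule k A) := fun n => BG.F_fd V n
    have hdlt : ∀ n, d n < d (n+1) := by
      intro n
      rw [hdd]
      simp only
      haveI := BG.F_fd V (n+1)
      apply Submodule.finrank_lt_finrank_of_lt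
      refine lt_of_le_of_ne (BG.F_mono V (by omega)) (fun h => hstab n (le_of_eq h.symm))
    have dge : ∀ n, n ≤ d n := by
      intro n
      induction n with
      | zero => exact Nat.zero_le _
      | succ n ih => have := hdlt n; omega
    by_cases hbd : ∃ aa : ℝ, ∀ᶠ n in atTop, f n ≤ aa
    · obtain ⟨aa, haa⟩ := hbd
      have hbd' : Filter.IsBoundedUnder (· ≤ ·) atTop f := ⟨aa, Filter.eventually_map.2 haa⟩
      have h1le : (1:ℝ) ≤ gk := by
        rw [hgkf]
        apply Filter.le_limsup_of_frequently_le _ hbd'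
        apply Filter.Eventually.frequently
        filter_upwards [eventually_ge_atTop 2] with n hn
        have h2r : (2:ℝ) ≤ (n:ℝ) := by exact_mod_cast hn
        have hdn : (n:ℝ) ≤ (d n : ℝ) := by exact_mod_cast dge n
        have hlogn : 0 < Real.log n := Real.log_pos (by linarith)
        have hlogd : Real.log n ≤ Real.log (d n) := Real.log_le_log (by linarith) hdn
        rw [hff]
        simp only
        rw [one_le_div hlogn]
        exact hlogd
      by_cases h2 : gk < 2
      -- The hard case : Bergman's argument.
      · right; left
        refine le_antisymm ?_ h1le
        -- basis of V
        set r : ℕ := Module.finrank k V with hrr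
        have hr0 : 0 < r := by
          rcases Nat.eq_zero_or_pos r with h0 | hp
          · exfalso
            apply hstab 0
            have hV0 : V = ⊥ := Submodule.finrank_eq_zero.1 (hrr.symm.trans h0)
            rw [BG.F_succ_eq V 0]
            apply sup_le
            · rw [pow_one, hV0]
              exact bot_le
            · exact le_refl _
          · exact hp
        haveI : Inhabited (Fin r) := ⟨⟨0, hr0⟩⟩
        set bV : Module.Basis (Fin r) k V := Module.finBasis k V with hbV
        set b : Fin r → A := fun i => ((bV i : V) : A) with hb
        have hVb : V = Submodule.span k (Set.range b) := by
          have h1 : Submodule.map V.subtype ⊤ = V := Submodule.map_subtype_top V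
          have h2 : (⊤ : Submodule k V) = Submodule.span k (Set.range bV) :=
            (Module.Basis.span_eq bV).symm
          rw [h2, Submodule.map_span] at h1
          rw [← h1]
          congr 1
          rw [← Set.range_comp]
          rfl
        set p : ℕ → ℕ := fun i => (BG.NW (BG.Nml k b) i).card with hpp
        have hdp : ∀ n, d n = ∑ i ∈ Finset.range (n+1), p i := by
          intro n
          rw [hdd]
          simp only
          rw [BG.finrank_F k b hVb n, BG.card_NL]
        -- find a large n with subquadratic growth
        set c : ℝ := (gk + 2) / 2 with hc
        have hgklt : gk < c := by rw [hc]; linarith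
        have hclt2 : c < 2 := by rw [hc]; linarith
        have hev : ∀ᶠ n in atTop, f n < c := by
          apply Filter.eventually_lt_of_limsup_lt _ hbd'
          rw [← hgkf]
          exact hgklt
        have hdlt2 : ∀ᶠ n in atTop, (d n : ℝ) < (n:ℝ) ^ c := by
          filter_upwards [hev, eventually_ge_atTop 2] with n hfn hn2
          have h2r : (2:ℝ) ≤ (n:ℝ) := by exact_mod_cast hn2
          have hlogn : 0 < Real.log n := Real.log_pos (by linarith)
          have hdpos : (0:ℝ) < (d n : ℝ) := by
            have : 2 ≤ d n := le_trans hn2 (dge n)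
            exact_mod_cast (by omega : 0 < d n)
          rw [Real.lt_rpow_iff_log_lt hdpos (by linarith)]
          rw [hff] at hfn
          simp only at hfn
          rw [div_lt_iff₀ hlogn] at hfn
          exact hfn
        have hpow : Tendsto (fun n : ℕ => ((n:ℝ)) ^ ((2:ℝ) - c)) atTop atTop :=
          (tendsto_rpow_atTop (by linarith)).comp tendsto_natCast_atTop_atTop
        have h100 : ∀ᶠ n : ℕ in atTop, (100:ℝ) < ((n:ℝ)) ^ ((2:ℝ) - c) :=
          hpow.eventually_gt_atTop 100
        have hbig : ∀ᶠ n : ℕ in atTop, 100 * d n < n * n := by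
          filter_upwards [hdlt2, h100, eventually_ge_atTop 2] with n h1 hh2 hn2
          have h2r : (2:ℝ) ≤ (n:ℝ) := by exact_mod_cast hn2
          have hnpos : (0:ℝ) < n := by linarith
          have hcpos : (0:ℝ) < (n:ℝ)^c := Real.rpow_pos_of_pos hnpos c
          have key : (100:ℝ) * (n:ℝ)^c < (n:ℝ) * (n:ℝ) := by
            have e1 : (n:ℝ)^((2:ℝ)-c) * (n:ℝ)^c = (n:ℝ)*(n:ℝ) := by
              rw [← Real.rpow_add hnpos]
              have he2 : (2:ℝ) - c + c = 2 := by ring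
              rw [he2, Real.rpow_two]
              ring
            calc (100:ℝ) * (n:ℝ)^c < (n:ℝ)^((2:ℝ)-c) * (n:ℝ)^c :=
                  mul_lt_mul_of_pos_right hh2 hcpos
              _ = (n:ℝ)*(n:ℝ) := e1
          have hfin : (100:ℝ) * (d n : ℝ) < (n:ℝ) * (n:ℝ) := by
            have h100d : (100:ℝ) * (d n : ℝ) < 100 * (n:ℝ)^c := by linarith
            linarith
          exact_mod_cast hfin
        obtain ⟨n₀, hn₀1000, hn₀big⟩ := ((eventually_ge_atTop 1000).and hbig).exists
        obtain ⟨j, hjn, hjle, hjsmall⟩ := BG.find_small_j p d hdp n₀ hn₀1000 hn₀big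
        have hj500 : 500 < j := by omega
        set m : ℕ := max (p j) 1 with hmm
        have h1m : 1 ≤ m := le_max_right _ _
        have hpm : (BG.NW (BG.Nml k b) j).card ≤ m := le_max_left _ _
        have hjm : 10 * m + 10 ≤ j := by omega
        have hgrow := BG.growth_linear k b h1m hpm hjm
        set C : ℕ := (m+1)*m*(r^(2*j)*r^(2*j)) with hC
        set DN : ℕ := (BG.NL k b (4*j)).card + C + 1 with hDN
        have hlinear : ∀ n, 4*j + 1 ≤ n → d n ≤ DN * n := by
          intro n hn
          have hg := hgrow n (by omega)
          have hdcard : d n = (BG.NL k b n).card := by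
            rw [hdd]
            simp only
            rw [BG.finrank_F k b hVb n]
          have hA : C * (n - 4*j) ≤ C * n := Nat.mul_le_mul_left C (by omega)
          have hB : (BG.NL k b (4*j)).card ≤ (BG.NL k b (4*j)).card * n :=
            Nat.le_mul_of_pos_right _ (by omega)
          have hD : DN * n = (BG.NL k b (4*j)).card * n + C * n + n := by
            rw [hDN]; ring
          omega
        have hDN1 : 1 ≤ DN := by omega
        have hgle : ∀ᶠ n in atTop, f n ≤ 1 + Real.log DN / Real.log n := by
          filter_upwards [eventually_ge_atTop (max (4*j+1) 2)] with n hn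
          have hn2 : 2 ≤ n := le_trans (le_max_right _ _) hn
          have hn4j : 4*j + 1 ≤ n := le_trans (le_max_left _ _) hn
          have hdn : d n ≤ DN * n := hlinear n hn4j
          have h2r : (2:ℝ) ≤ (n:ℝ) := by exact_mod_cast hn2
          have hlogn : 0 < Real.log n := Real.log_pos (by linarith)
          have hdpos : (0:ℝ) < (d n : ℝ) := by
            have : 2 ≤ d n := le_trans hn2 (dge n)
            exact_mod_cast (by omega : 0 < d n)
          have hcast : ((DN * n : ℕ) : ℝ) = (DN:ℝ) * (n:ℝ) := by push_cast; ring
          have hlog : Real.log (d n) ≤ Real.log ((DN:ℝ) * (n:ℝ)) := by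
            rw [← hcast]
            exact Real.log_le_log hdpos (by exact_mod_cast hdn)
          have hsplit : Real.log ((DN:ℝ) * (n:ℝ)) = Real.log DN + Real.log n :=
            Real.log_mul (by exact_mod_cast (by omega : DN ≠ 0)) (by linarith)
          rw [hff]
          simp only
          rw [div_le_iff₀ hlogn]
          have he : (1 + Real.log DN / Real.log n) * Real.log n
              = Real.log n + Real.log DN := by
            field_simp
          rw [he]
          rw [hsplit] at hlog
          linarith
        have hgtend : Tendsto (fun n : ℕ => 1 + Real.log DN / Real.log n) atTop (nhds 1) := by
          have h1 : Tendsto (fun n : ℕ => Real.log (DN:ℝ) / Real.log n) atTop (nhds 0) :=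
            Filter.Tendsto.div_atTop tendsto_const_nhds
              (Real.tendsto_log_atTop.comp tendsto_natCast_atTop_atTop)
          have h2t := Tendsto.add
            (tendsto_const_nhds : Tendsto (fun _ : ℕ => (1:ℝ)) atTop (nhds 1)) h1
          simpa using h2t
        have hcob : Filter.IsCoboundedUnder (· ≤ ·) atTop f := by
          apply Filter.IsBoundedUnder.isCoboundedUnder_le (α := ℝ)
          refine ⟨0, Filter.eventually_map.2 ?_⟩
          filter_upwards [eventually_ge_atTop 2] with n hn
          have h2r : (2:ℝ) ≤ (n:ℝ) := by exact_mod_cast hn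
          have hlogn : 0 < Real.log n := Real.log_pos (by linarith)
          have hdn1 : (1:ℝ) ≤ (d n : ℝ) := by
            have : 1 ≤ d n := le_trans (by omega) (dge n)
            exact_mod_cast this
          have : 0 ≤ Real.log (d n) := Real.log_nonneg hdn1
          rw [hff]
          simp only
          positivity
        rw [hgkf]
        calc limsup f atTop ≤ limsup (fun n : ℕ => 1 + Real.log DN / Real.log n) atTop :=
              Filter.limsup_le_limsup hgle hcob (hgtend.isBoundedUnder_le)
          _ = 1 := hgtend.limsup_eq
      · right; right
        linarith
    · left
      rw [hgkf, Filter.limsup_eq]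
      push_neg at hbd
      have hempty : {a : ℝ | ∀ᶠ n in atTop, f n ≤ a} = ∅ := by
        rw [Set.eq_empty_iff_forall_notMem]
        intro a ha
        exact hbd a (ha.mono fun n hn => not_lt.2 hn)
      rw [hempty]
      exact Real.sInf_empty
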